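/- Let ψ₁, ψ₂ : [0,2π] → ℝ be bounded below by m > 0. Then for all θ ∈ [0,2π], |exp((1/2π)∫₀^{2π} P_r(θ−t) log(1/(2πψ₁(t))) dt) − exp((1/2π)∫₀^{2π} P_r(θ−t) log(1/(2πψ₂(t))) dt)| ≤ (1/(2πm²))·‖ψ₁−ψ₂‖_{∞,[0,2π]}, where P_r(s) = (1−r²)/(1+r²−2r cos s) is the Poisson kernel, for any fixed r ∈ [0,1). -/

import Mathlib

open Set Real intervalIntegral

lemma denom_pos {r : ℝ} (hr0 : 0 ≤ r) (hr1 : r < 1) (s : ℝ) :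
    0 < 1 + r ^ 2 - 2 * r * Real.cos s := by
  nlinarith [Real.cos_le_one s, sq_nonneg (1 - r)]

lemma denom1_pos {r : ℝ} (hr0 : 0 ≤ r) (hr1 : r < 1) (s : ℝ) :
    0 < 1 - r * Real.cos s := by
  nlinarith [Real.cos_le_one s, Real.neg_one_le_cos s]

lemma poisson_hasDerivAt {r : ℝ} (hr0 : 0 ≤ r) (hr1 : r < 1) (s : ℝ) :
    HasDerivAt (fun s => s + 2 * Real.arctan (r * Real.sin s / (1 - r * Real.cos s)))
      ((1 - r ^ 2) / (1 + r ^ 2 - 2 * r * Real.cos s)) s := by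
  have hc1 := denom1_pos hr0 hr1 s
  have hd := denom_pos hr0 hr1 s
  have h1 : HasDerivAt (fun s => r * Real.sin s) (r * Real.cos s) s :=
    (Real.hasDerivAt_sin s).const_mul r
  have h2 : HasDerivAt (fun s => 1 - r * Real.cos s) (r * Real.sin s) s := by
    have := ((Real.hasDerivAt_cos s).const_mul r).const_sub 1
    simpa using this
  have hq := h1.div h2 hc1.ne'
  have harc := hq.arctan
  have := ((hasDerivAt_id s).add (harc.const_mul 2))
  convert this using 1 <;> try rfl
  have hsc := Real.sin_sq_add_cos_sq s
  have hnum : r * Real.cos s * (1 - r * Real.cos s) - r * Real.sin s * (r * Real.sin s)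
      = r * Real.cos s - r ^ 2 := by linear_combination (-(r ^ 2)) * hsc
  have hden : 1 + (r * Real.sin s / (1 - r * Real.cos s)) ^ 2
      = (1 + r ^ 2 - 2 * r * Real.cos s) / (1 - r * Real.cos s) ^ 2 := by
    field_simp
    linear_combination r ^ 2 * hsc
  simp only [Pi.div_apply]
  rw [hden, hnum]
  field_simp
  rw [one_add_div (by linarith)]
  ring

lemma poisson_cont {r : ℝ} (hr0 : 0 ≤ r) (hr1 : r < 1) :
    Continuous fun s => (1 - r ^ 2) / (1 + r ^ 2 - 2 * r * Real.cos s) :=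
  continuous_const.div (by continuity) fun s => (denom_pos hr0 hr1 s).ne'

lemma poisson_integral {r : ℝ} (hr0 : 0 ≤ r) (hr1 : r < 1) :
    ∫ s in (0:ℝ)..(2 * Real.pi), (1 - r ^ 2) / (1 + r ^ 2 - 2 * r * Real.cos s) = 2 * Real.pi := by
  rw [intervalIntegral.integral_eq_sub_of_hasDerivAt
      (fun s _ => poisson_hasDerivAt hr0 hr1 s) ((poisson_cont hr0 hr1).intervalIntegrable _ _)]
  simp [Real.sin_two_pi, Real.cos_two_pi]

lemma poisson_shift_integral {r : ℝ} (hr0 : 0 ≤ r) (hr1 : r < 1) (θ : ℝ) :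
    ∫ t in (0:ℝ)..(2 * Real.pi), (1 - r ^ 2) / (1 + r ^ 2 - 2 * r * Real.cos (θ - t))
      = 2 * Real.pi := by
  have hper : Function.Periodic
      (fun s => (1 - r ^ 2) / (1 + r ^ 2 - 2 * r * Real.cos s)) (2 * Real.pi) := by
    intro x; simp [Real.cos_add_two_pi]
  rw [intervalIntegral.integral_comp_sub_left
      (fun s => (1 - r ^ 2) / (1 + r ^ 2 - 2 * r * Real.cos s)) θ]
  have := hper.intervalIntegral_add_eq (θ - 2 * Real.pi) 0
  simp only [zero_add, sub_add_cancel] at this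
  rw [sub_zero, this]
  exact poisson_integral hr0 hr1

lemma log_lipschitz_bound {m a b : ℝ} (hm : 0 < m) (ha : m ≤ a) (hb : m ≤ b) :
    |Real.log a - Real.log b| ≤ |a - b| / m := by
  wlog hab : b ≤ a generalizing a b
  · rw [abs_sub_comm, abs_sub_comm a b]; exact this hb ha (le_of_not_ge hab)
  have ha0 : 0 < a := hm.trans_le ha
  have hb0 : 0 < b := hm.trans_le hb
  rw [abs_of_nonneg (sub_nonneg.2 (Real.log_le_log hb0 hab)),
    abs_of_nonneg (sub_nonneg.2 hab)]
  rw [← Real.log_div ha0.ne' hb0.ne']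
  have h1 : Real.log (a / b) ≤ a / b - 1 := Real.log_le_sub_one_of_pos (by positivity)
  have h2 : a / b - 1 = (a - b) / b := by field_simp
  have h3 : (a - b) / b ≤ (a - b) / m :=
    div_le_div_of_nonneg_left (sub_nonneg.2 hab) hm hb
  linarith

lemma exp_diff_bound (a b : ℝ) :
    |Real.exp a - Real.exp b| ≤ Real.exp (max a b) * |a - b| := by
  wlog hab : b ≤ a generalizing a b
  · rw [abs_sub_comm, abs_sub_comm a b, max_comm]; exact this b a (le_of_not_ge hab)
  rw [max_eq_left hab, abs_of_nonneg (sub_nonneg.2 (Real.exp_le_exp.2 hab)),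
    abs_of_nonneg (sub_nonneg.2 hab)]
  have h1 : (b - a) + 1 ≤ Real.exp (b - a) := Real.add_one_le_exp _
  have h2 : Real.exp b = Real.exp a * Real.exp (b - a) := by
    rw [← Real.exp_add]; ring_nf
  nlinarith [Real.exp_pos a, Real.exp_pos (b - a)]

/-- Stability of exponentials of Poisson integrals of `log (1/(2πψ))`. -/
theorem exp_poisson_integral_diff_bound
    (ψ₁ ψ₂ : ℝ → ℝ) (m : ℝ) (hm : 0 < m)
    (hψ₁ : ∀ t ∈ Icc (0:ℝ) (2 * Real.pi), m ≤ ψ₁ t)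
    (hψ₂ : ∀ t ∈ Icc (0:ℝ) (2 * Real.pi), m ≤ ψ₂ t)
    (hc₁ : ContinuousOn ψ₁ (Icc 0 (2 * Real.pi)))
    (hc₂ : ContinuousOn ψ₂ (Icc 0 (2 * Real.pi)))
    (N : ℝ) (hN : ∀ t ∈ Icc (0:ℝ) (2 * Real.pi), |ψ₁ t - ψ₂ t| ≤ N)
    (r : ℝ) (hr0 : 0 ≤ r) (hr1 : r < 1) (θ : ℝ) (hθ : θ ∈ Icc (0:ℝ) (2 * Real.pi)) :
    |Real.exp ((1 / (2 * Real.pi)) * ∫ t in (0:ℝ)..(2 * Real.pi),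
          ((1 - r ^ 2) / (1 + r ^ 2 - 2 * r * Real.cos (θ - t))) *
            Real.log (1 / (2 * Real.pi * ψ₁ t))) -
        Real.exp ((1 / (2 * Real.pi)) * ∫ t in (0:ℝ)..(2 * Real.pi),
          ((1 - r ^ 2) / (1 + r ^ 2 - 2 * r * Real.cos (θ - t))) *
            Real.log (1 / (2 * Real.pi * ψ₂ t)))|
      ≤ (1 / (2 * Real.pi * m ^ 2)) * N := by
  have pi_pos := Real.pi_pos
  have h2π : (0:ℝ) < 2 * Real.pi := by linarith
  have hN0 : 0 ≤ N := le_trans (abs_nonneg _) (hN 0 ⟨le_refl _, by linarith⟩)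
  set P : ℝ → ℝ := fun t => (1 - r ^ 2) / (1 + r ^ 2 - 2 * r * Real.cos (θ - t)) with hP
  have hPnn : ∀ t, 0 ≤ P t := fun t =>
    div_nonneg (by nlinarith) (denom_pos hr0 hr1 _).le
  have hPcont : Continuous P := (poisson_cont hr0 hr1).comp (by continuity)
  have hPint : ∫ t in (0:ℝ)..(2 * Real.pi), P t = 2 * Real.pi :=
    poisson_shift_integral hr0 hr1 θ
  set L₁ : ℝ → ℝ := fun t => Real.log (1 / (2 * Real.pi * ψ₁ t)) with hL₁
  set L₂ : ℝ → ℝ := fun t => Real.log (1 / (2 * Real.pi * ψ₂ t)) with hL₂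
  set c : ℝ := Real.log (1 / (2 * Real.pi * m)) with hc
  -- continuity of L on Icc
  have hLcont : ∀ (ψ : ℝ → ℝ), ContinuousOn ψ (Icc 0 (2 * Real.pi)) →
      (∀ t ∈ Icc (0:ℝ) (2 * Real.pi), m ≤ ψ t) →
      ContinuousOn (fun t => Real.log (1 / (2 * Real.pi * ψ t))) (Icc 0 (2 * Real.pi)) := by
    intro ψ hcψ hmψ
    apply ContinuousOn.log
    · exact continuousOn_const.div (continuousOn_const.mul hcψ)
        (fun t ht => by have h0 : 0 < ψ t := hm.trans_le (hmψ t ht); positivity)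
    · intro t ht
      have h0 : 0 < ψ t := hm.trans_le (hmψ t ht)
      positivity
  have hL₁cont := hLcont ψ₁ hc₁ hψ₁
  have hL₂cont := hLcont ψ₂ hc₂ hψ₂
  -- pointwise bounds
  have hLle : ∀ (ψ : ℝ → ℝ), (∀ t ∈ Icc (0:ℝ) (2 * Real.pi), m ≤ ψ t) →
      ∀ t ∈ Icc (0:ℝ) (2 * Real.pi), Real.log (1 / (2 * Real.pi * ψ t)) ≤ c := by
    intro ψ hmψ t ht
    have hmt := hmψ t ht
    have h0 : 0 < ψ t := hm.trans_le hmt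
    apply Real.log_le_log (by positivity)
    exact one_div_le_one_div_of_le (by positivity) (by nlinarith)
  have hLdiff : ∀ t ∈ Icc (0:ℝ) (2 * Real.pi), |L₁ t - L₂ t| ≤ N / m := by
    intro t ht
    have h1 := hψ₁ t ht
    have h2 := hψ₂ t ht
    have hp1 : (0:ℝ) < ψ₁ t := hm.trans_le h1
    have hp2 : (0:ℝ) < ψ₂ t := hm.trans_le h2
    have e1 : L₁ t = -(Real.log (2 * Real.pi) + Real.log (ψ₁ t)) := by
      simp only [hL₁]
      rw [one_div, Real.log_inv, Real.log_mul h2π.ne' hp1.ne']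
    have e2 : L₂ t = -(Real.log (2 * Real.pi) + Real.log (ψ₂ t)) := by
      simp only [hL₂]
      rw [one_div, Real.log_inv, Real.log_mul h2π.ne' hp2.ne']
    have : L₁ t - L₂ t = Real.log (ψ₂ t) - Real.log (ψ₁ t) := by rw [e1, e2]; ring
    rw [this]
    calc |Real.log (ψ₂ t) - Real.log (ψ₁ t)| ≤ |ψ₂ t - ψ₁ t| / m :=
          log_lipschitz_bound hm h2 h1
      _ ≤ N / m := by
          gcongr
          rw [abs_sub_comm]
          exact hN t ht
  -- integrability
  have hint₁ : IntervalIntegrable (fun t => P t * L₁ t) MeasureTheory.volume 0 (2 * Real.pi) :=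
    (hPcont.continuousOn.mul hL₁cont).intervalIntegrable_of_Icc h2π.le
  have hint₂ : IntervalIntegrable (fun t => P t * L₂ t) MeasureTheory.volume 0 (2 * Real.pi) :=
    (hPcont.continuousOn.mul hL₂cont).intervalIntegrable_of_Icc h2π.le
  have hintc : IntervalIntegrable (fun t => P t * c) MeasureTheory.volume 0 (2 * Real.pi) :=
    (hPcont.mul continuous_const).intervalIntegrable _ _
  have hintabs : IntervalIntegrable (fun t => P t * |L₁ t - L₂ t|)
      MeasureTheory.volume 0 (2 * Real.pi) :=
    (hPcont.continuousOn.mul (hL₁cont.sub hL₂cont).abs).intervalIntegrable_of_Icc h2π.le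
  have hintNm : IntervalIntegrable (fun t => P t * (N / m))
      MeasureTheory.volume 0 (2 * Real.pi) :=
    (hPcont.mul continuous_const).intervalIntegrable _ _
  set I₁ : ℝ := ∫ t in (0:ℝ)..(2 * Real.pi), P t * L₁ t with hI₁def
  set I₂ : ℝ := ∫ t in (0:ℝ)..(2 * Real.pi), P t * L₂ t with hI₂def
  -- upper bounds on the integrals
  have hupper : ∀ (L : ℝ → ℝ), IntervalIntegrable (fun t => P t * L t)
        MeasureTheory.volume 0 (2 * Real.pi) →
      (∀ t ∈ Icc (0:ℝ) (2 * Real.pi), L t ≤ c) →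
      (∫ t in (0:ℝ)..(2 * Real.pi), P t * L t) ≤ c * (2 * Real.pi) := by
    intro L hint hle
    calc (∫ t in (0:ℝ)..(2 * Real.pi), P t * L t)
        ≤ ∫ t in (0:ℝ)..(2 * Real.pi), P t * c :=
          intervalIntegral.integral_mono_on h2π.le hint hintc
            (fun t ht => mul_le_mul_of_nonneg_left (hle t ht) (hPnn t))
      _ = (∫ t in (0:ℝ)..(2 * Real.pi), P t) * c := intervalIntegral.integral_mul_const c P
      _ = c * (2 * Real.pi) := by rw [hPint]; ring
  have hI₁le : I₁ ≤ c * (2 * Real.pi) := hupper L₁ hint₁ (hLle ψ₁ hψ₁)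
  have hI₂le : I₂ ≤ c * (2 * Real.pi) := hupper L₂ hint₂ (hLle ψ₂ hψ₂)
  -- bound on the difference
  have hIdiff : |I₁ - I₂| ≤ (N / m) * (2 * Real.pi) := by
    have hsub : I₁ - I₂ = ∫ t in (0:ℝ)..(2 * Real.pi), (P t * L₁ t - P t * L₂ t) :=
      (intervalIntegral.integral_sub hint₁ hint₂).symm
    rw [hsub]
    calc |∫ t in (0:ℝ)..(2 * Real.pi), (P t * L₁ t - P t * L₂ t)|
        ≤ ∫ t in (0:ℝ)..(2 * Real.pi), |P t * L₁ t - P t * L₂ t| :=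
          intervalIntegral.abs_integral_le_integral_abs h2π.le
      _ = ∫ t in (0:ℝ)..(2 * Real.pi), P t * |L₁ t - L₂ t| := by
          apply intervalIntegral.integral_congr
          intro t _
          dsimp only
          rw [← mul_sub, abs_mul, abs_of_nonneg (hPnn t)]
      _ ≤ ∫ t in (0:ℝ)..(2 * Real.pi), P t * (N / m) :=
          intervalIntegral.integral_mono_on h2π.le hintabs hintNm
            (fun t ht => mul_le_mul_of_nonneg_left (hLdiff t ht) (hPnn t))
      _ = (∫ t in (0:ℝ)..(2 * Real.pi), P t) * (N / m) :=
          intervalIntegral.integral_mul_const _ P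
      _ = (N / m) * (2 * Real.pi) := by rw [hPint]; ring
  set a₁ : ℝ := (1 / (2 * Real.pi)) * I₁ with ha₁
  set a₂ : ℝ := (1 / (2 * Real.pi)) * I₂ with ha₂
  have ha₁le : a₁ ≤ c := by
    rw [ha₁]
    calc (1 / (2 * Real.pi)) * I₁ ≤ (1 / (2 * Real.pi)) * (c * (2 * Real.pi)) :=
          mul_le_mul_of_nonneg_left hI₁le (by positivity)
      _ = c := by field_simp
  have ha₂le : a₂ ≤ c := by
    rw [ha₂]
    calc (1 / (2 * Real.pi)) * I₂ ≤ (1 / (2 * Real.pi)) * (c * (2 * Real.pi)) :=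
          mul_le_mul_of_nonneg_left hI₂le (by positivity)
      _ = c := by field_simp
  have hadiff : |a₁ - a₂| ≤ N / m := by
    rw [ha₁, ha₂, ← mul_sub, abs_mul, abs_of_nonneg (by positivity : (0:ℝ) ≤ 1 / (2 * Real.pi))]
    calc (1 / (2 * Real.pi)) * |I₁ - I₂| ≤ (1 / (2 * Real.pi)) * ((N / m) * (2 * Real.pi)) :=
          mul_le_mul_of_nonneg_left hIdiff (by positivity)
      _ = N / m := by field_simp
  have hexpmax : Real.exp (max a₁ a₂) ≤ 1 / (2 * Real.pi * m) := by
    have h1 : max a₁ a₂ ≤ c := max_le ha₁le ha₂le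
    calc Real.exp (max a₁ a₂) ≤ Real.exp c := Real.exp_le_exp.2 h1
      _ = 1 / (2 * Real.pi * m) := by rw [hc, Real.exp_log (by positivity)]
  calc |Real.exp a₁ - Real.exp a₂| ≤ Real.exp (max a₁ a₂) * |a₁ - a₂| := exp_diff_bound a₁ a₂
    _ ≤ (1 / (2 * Real.pi * m)) * (N / m) :=
        mul_le_mul hexpmax hadiff (abs_nonneg _) (by positivity)
    _ = (1 / (2 * Real.pi * m ^ 2)) * N := by ring
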